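/- Let s ≥ 1 be an integer and let k be a positive integer. Then Σ_{d=1}^∞ μ(kd)/(kd)^{2s} = μ(k)·k^{2s} / (J_{2s}(k)·ζ(2s)·k^{2s}) simplifies to Σ_{d=1}^∞ μ(kd)/d^{2s} = μ(k)·k^{2s}/(J_{2s}(k)·ζ(2s)), where J_{2s} is the Jordan totient function, μ the Möbius function, and ζ the Riemann zeta function. -/

import Mathlib

open scoped BigOperators
open ArithmeticFunction
open scoped ArithmeticFunction.Moebius
open scoped ArithmeticFunction.zeta
open scoped LSeries.notation

/-- Generalized gcd `(a,b)_s`: the largest `d ^ s` (with `d` a positive integer)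
dividing both `a` and `b`. -/
def ggcd (s a b : ℕ) : ℕ :=
  (Nat.findGreatest (fun d => d ^ s ∣ a ∧ d ^ s ∣ b) (max a b)) ^ s

/-- The Cohen–Ramanujan sum `c_k^{(s)}(n) = Σ_{h=1, (h,k^s)_s=1}^{k^s} e^{2πinh/k^s}`. -/
noncomputable def CRS (s k n : ℕ) : ℂ :=
  ∑ h ∈ Finset.Icc 1 (k ^ s),
    if ggcd s h (k ^ s) = 1 then
      Complex.exp (2 * Real.pi * Complex.I * n * h / (k ^ s))
    else 0

/-- The core of `k`: its largest squarefree divisor. -/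
def core (k : ℕ) : ℕ := ∏ p ∈ k.primeFactors, p

/-- `k* = k / k̄`. -/
def spart (k : ℕ) : ℕ := k / core k

/-- `ξ_d(k) = d` if `d ∣ k`, and `0` otherwise. -/
def xi (d k : ℕ) : ℕ := if d ∣ k then d else 0

/-- Klee's function `Φ_s(n) = n ∏_{p prime, p^s ∣ n} (1 - 1/p^s)`. -/
noncomputable def Klee (s n : ℕ) : ℂ :=
  n * ∏ p ∈ n.primeFactors.filter (fun p => p ^ s ∣ n), (1 - 1 / (p : ℂ) ^ s)

/-- The Jordan totient function `J_s(n) = n^s ∏_{p ∣ n} (1 - 1/p^s)` (as a complex number). -/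
noncomputable def Jordan (s n : ℕ) : ℂ :=
  (n : ℂ) ^ s * ∏ p ∈ n.primeFactors, (1 - 1 / (p : ℂ) ^ s)

/-- μ restricted to integers coprime to `k`. -/
noncomputable def hfun (k : ℕ) : ArithmeticFunction ℂ :=
  ⟨fun d => if Nat.Coprime d k then (μ d : ℂ) else 0, by simp⟩

/-- indicator of `n ≠ 0` with all prime factors dividing `k`. -/
noncomputable def cfun (k : ℕ) : ArithmeticFunction ℂ :=
  ⟨fun n => if n ≠ 0 ∧ n.primeFactors ⊆ k.primeFactors then 1 else 0, by simp⟩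

/-- μ restricted to divisors of `k`. -/
noncomputable def gfun (k : ℕ) : ArithmeticFunction ℂ :=
  ⟨fun e => if e ∣ k then (μ e : ℂ) else 0, by simp⟩

lemma hfun_apply (k d : ℕ) : hfun k d = if Nat.Coprime d k then (μ d : ℂ) else 0 := rfl
lemma cfun_apply (k n : ℕ) : cfun k n = if n ≠ 0 ∧ n.primeFactors ⊆ k.primeFactors then 1 else 0 := rfl
lemma gfun_apply (k e : ℕ) : gfun k e = if e ∣ k then (μ e : ℂ) else 0 := rfl

lemma hfun_mult (k : ℕ) : (hfun k).IsMultiplicative := by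
  rw [ArithmeticFunction.IsMultiplicative.iff_ne_zero]
  constructor
  · simp [hfun_apply, Nat.coprime_one_left]
  · intro m n hm hn hmn
    simp only [hfun_apply, Nat.coprime_mul_iff_left]
    split_ifs with h h1 h2 h3 h4 <;>
      simp_all [isMultiplicative_moebius.map_mul_of_coprime hmn]

lemma cfun_mult (k : ℕ) : (cfun k).IsMultiplicative := by
  rw [ArithmeticFunction.IsMultiplicative.iff_ne_zero]
  constructor
  · simp [cfun_apply]
  · intro m n hm hn hmn
    simp only [cfun_apply, Nat.primeFactors_mul hm hn, Finset.union_subset_iff,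
      ne_eq, mul_eq_zero, hm, hn, or_self, not_false_eq_true, true_and]
    split_ifs with h h1 h2 h3 h4 <;> simp_all

lemma gfun_mult (k : ℕ) : (gfun k).IsMultiplicative := by
  rw [ArithmeticFunction.IsMultiplicative.iff_ne_zero]
  constructor
  · simp [gfun_apply]
  · intro m n hm hn hmn
    have hiff : m * n ∣ k ↔ m ∣ k ∧ n ∣ k := by
      constructor
      · intro h; exact ⟨(dvd_mul_right m n).trans h, (dvd_mul_left n m).trans h⟩
      · rintro ⟨h1, h2⟩; exact hmn.mul_dvd_of_dvd_of_dvd h1 h2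
    simp only [gfun_apply, hiff]
    split_ifs with h h1 h2 h3 h4 <;>
      simp_all [isMultiplicative_moebius.map_mul_of_coprime hmn]

lemma hfun_prime_pow {k p j : ℕ} (hp : p.Prime) :
    hfun k (p ^ j) = if p ∣ k then (if j = 0 then 1 else 0) else (μ (p ^ j) : ℂ) := by
  rcases eq_or_ne j 0 with rfl | hj
  · simp [hfun_apply, Nat.coprime_one_left]
  · by_cases hpk : p ∣ k
    · have : ¬ Nat.Coprime (p ^ j) k := by
        intro hco
        have h1 : p ∣ p ^ j := dvd_pow_self p hj
        have := Nat.eq_one_of_dvd_coprimes hco h1 hpk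
        exact hp.one_lt.ne' this
      simp [hfun_apply, this, hpk, hj]
    · have hco : Nat.Coprime (p ^ j) k :=
        Nat.Coprime.pow_left _ ((Nat.Prime.coprime_iff_not_dvd hp).mpr hpk)
      simp [hfun_apply, hco, hpk]

lemma zeta_mul_hfun {k : ℕ} (hk : Squarefree k) :
    (↑ζ * hfun k : ArithmeticFunction ℂ) = cfun k := by
  rw [ArithmeticFunction.IsMultiplicative.eq_iff_eq_on_prime_powers _
    (isMultiplicative_zeta.natCast.mul (hfun_mult k)) _ (cfun_mult k)]
  intro p i hp
  rw [ArithmeticFunction.coe_zeta_mul_apply, Nat.sum_divisors_prime_pow hp]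
  by_cases hpk : p ∣ k
  · have hsum : ∀ j ∈ Finset.range (i + 1), hfun k (p ^ j) = if j = 0 then 1 else 0 := by
      intro j _; rw [hfun_prime_pow hp, if_pos hpk]
    rw [Finset.sum_congr rfl hsum, Finset.sum_ite_eq' (Finset.range (i+1)) 0 (fun _ => (1:ℂ))]
    have hmem : (0:ℕ) ∈ Finset.range (i+1) := by simp
    rw [if_pos hmem, cfun_apply, if_pos]
    refine ⟨pow_ne_zero _ hp.pos.ne', ?_⟩
    intro q hq
    rw [Nat.mem_primeFactors] at hq ⊢
    obtain ⟨hq1, hq2, _⟩ := hq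
    exact ⟨hq1, (hq1.dvd_of_dvd_pow hq2).trans hpk, hk.ne_zero⟩
  · have hsum : ∀ j ∈ Finset.range (i + 1), hfun k (p ^ j) = (μ (p ^ j) : ℂ) := by
      intro j _; rw [hfun_prime_pow hp, if_neg hpk]
    rw [Finset.sum_congr rfl hsum]
    have key : (∑ j ∈ Finset.range (i + 1), (μ (p ^ j) : ℤ)) =
        (1 : ArithmeticFunction ℤ) (p ^ i) := by
      rw [← ArithmeticFunction.moebius_mul_coe_zeta, ArithmeticFunction.coe_mul_zeta_apply,
        Nat.sum_divisors_prime_pow hp]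
    have : (∑ j ∈ Finset.range (i + 1), (μ (p ^ j) : ℂ)) =
        ((∑ j ∈ Finset.range (i + 1), (μ (p ^ j) : ℤ) : ℤ) : ℂ) := by push_cast; rfl
    rw [this, key]
    rcases eq_or_ne i 0 with rfl | hi
    · simp [cfun_apply]
    · have h1 : p ^ i ≠ 1 := (Nat.one_lt_pow hi hp.one_lt).ne'
      have h2 : ¬ ((p ^ i).primeFactors ⊆ k.primeFactors) := by
        intro hsub
        have : p ∈ (p ^ i).primeFactors := by
          rw [Nat.mem_primeFactors]
          exact ⟨hp, dvd_pow_self p hi, pow_ne_zero _ hp.pos.ne'⟩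
        have := hsub this
        rw [Nat.mem_primeFactors] at this
        exact hpk this.2.1
      simp [cfun_apply, h1, h2, ArithmeticFunction.one_apply, hp.one_lt.ne', hi]

lemma cfun_mul_gfun {k : ℕ} (hk : Squarefree k) :
    (cfun k * gfun k : ArithmeticFunction ℂ) = 1 := by
  rw [ArithmeticFunction.IsMultiplicative.eq_iff_eq_on_prime_powers _
    ((cfun_mult k).mul (gfun_mult k)) _ ArithmeticFunction.isMultiplicative_one]
  intro p i hp
  rw [ArithmeticFunction.mul_apply,
    Nat.sum_divisorsAntidiagonal (f := fun a b => cfun k a * gfun k b),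
    Nat.sum_divisors_prime_pow hp]
  have hdiv : ∀ j ∈ Finset.range (i + 1), p ^ i / p ^ j = p ^ (i - j) := by
    intro j hj
    exact Nat.pow_div (Nat.lt_succ_iff.mp (Finset.mem_range.mp hj)) hp.pos
  by_cases hpk : p ∣ k
  · have hterm : ∀ j ∈ Finset.range (i + 1),
        cfun k (p ^ j) * gfun k (p ^ i / p ^ j) = (μ (p ^ (i - j)) : ℂ) := by
      intro j hj
      rw [hdiv j hj]
      have hc : cfun k (p ^ j) = 1 := by
        rw [cfun_apply, if_pos]
        refine ⟨pow_ne_zero _ hp.pos.ne', ?_⟩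
        intro q hq
        rw [Nat.mem_primeFactors] at hq ⊢
        exact ⟨hq.1, (hq.1.dvd_of_dvd_pow hq.2.1).trans hpk, hk.ne_zero⟩
      rw [hc, one_mul, gfun_apply]
      set m := i - j with hm'
      rcases Nat.lt_or_ge m 2 with hm | hm
      · have hd : p ^ m ∣ k := by
          interval_cases m
          · simp
          · simpa using hpk
        rw [if_pos hd]
      · have h2 : (μ (p ^ m) : ℤ) = 0 := by
          apply ArithmeticFunction.moebius_eq_zero_of_not_squarefree
          intro hsf
          refine hp.not_isUnit (hsf p ?_)
          rw [← pow_two]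
          exact pow_dvd_pow p hm
        rw [h2]
        simp
    rw [Finset.sum_congr rfl hterm, ← Finset.sum_range_reflect (fun j => (μ (p ^ (i - j)) : ℂ))]
    have hre : ∀ j ∈ Finset.range (i + 1),
        (μ (p ^ (i - (i + 1 - 1 - j))) : ℂ) = (μ (p ^ j) : ℂ) := by
      intro j hj
      rw [Finset.mem_range] at hj
      have h' : i - (i + 1 - 1 - j) = j := by omega
      rw [h']
    rw [Finset.sum_congr rfl hre]
    have key : (∑ j ∈ Finset.range (i + 1), (μ (p ^ j) : ℤ)) =
        (1 : ArithmeticFunction ℤ) (p ^ i) := by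
      rw [← ArithmeticFunction.moebius_mul_coe_zeta, ArithmeticFunction.coe_mul_zeta_apply,
        Nat.sum_divisors_prime_pow hp]
    have hcast : (∑ j ∈ Finset.range (i + 1), (μ (p ^ j) : ℂ)) =
        ((∑ j ∈ Finset.range (i + 1), (μ (p ^ j) : ℤ) : ℤ) : ℂ) := by push_cast; rfl
    rw [hcast, key]
    simp [ArithmeticFunction.one_apply, apply_ite (fun z : ℤ => (z : ℂ))]
  · rcases eq_or_ne i 0 with rfl | hi
    · simp [cfun_apply, gfun_apply]
    · have hterm : ∀ j ∈ Finset.range (i + 1),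
          cfun k (p ^ j) * gfun k (p ^ i / p ^ j) = 0 := by
        intro j hj
        rcases eq_or_ne j 0 with rfl | hj0
        · have hg : gfun k (p ^ i / p ^ 0) = 0 := by
            rw [hdiv 0 (by simp), gfun_apply, if_neg]
            intro hd
            exact hpk ((dvd_pow_self p hi).trans hd)
          rw [hg, mul_zero]
        · have hc : cfun k (p ^ j) = 0 := by
            rw [cfun_apply, if_neg]
            rintro ⟨-, hsub⟩
            have hmem : p ∈ (p ^ j).primeFactors := by
              rw [Nat.mem_primeFactors]
              exact ⟨hp, dvd_pow_self p hj0, pow_ne_zero _ hp.pos.ne'⟩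
            exact hpk (Nat.dvd_of_mem_primeFactors (hsub hmem))
          rw [hc, zero_mul]
      rw [Finset.sum_congr rfl hterm, Finset.sum_const_zero,
        ArithmeticFunction.one_apply_ne ((Nat.one_lt_pow hi hp.one_lt).ne')]

lemma norm_moebius_le_one (n : ℕ) : ‖(μ n : ℂ)‖ ≤ 1 := by
  rw [Complex.norm_intCast]
  exact_mod_cast abs_moebius_le_one

lemma hfun_summable {k : ℕ} {w : ℂ} (hw : 1 < w.re) : LSeriesSummable ↗(hfun k) w := by
  refine LSeriesSummable_of_bounded_of_one_lt_re (m := 1) (fun n _ => ?_) hw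
  rw [hfun_apply]
  split_ifs
  · exact norm_moebius_le_one n
  · simp

lemma cfun_summable {k : ℕ} {w : ℂ} (hw : 1 < w.re) : LSeriesSummable ↗(cfun k) w := by
  refine LSeriesSummable_of_bounded_of_one_lt_re (m := 1) (fun n _ => ?_) hw
  rw [cfun_apply]
  split_ifs <;> simp

lemma gfun_summable {k : ℕ} {w : ℂ} (hw : 1 < w.re) : LSeriesSummable ↗(gfun k) w := by
  refine LSeriesSummable_of_bounded_of_one_lt_re (m := 1) (fun n _ => ?_) hw
  rw [gfun_apply]
  split_ifs
  · exact norm_moebius_le_one n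
  · simp

lemma coe_zeta_eq : ↗((ζ : ArithmeticFunction ℕ) : ArithmeticFunction ℂ) = ↗ζ := by
  funext n
  simp [ArithmeticFunction.natCoe_apply]

noncomputable def pif (m : ℕ) : ArithmeticFunction ℂ :=
  ⟨fun n => if n = 0 then 0 else 1 / (n : ℂ) ^ m, by simp⟩

lemma pif_apply (m n : ℕ) : pif m n = if n = 0 then 0 else 1 / (n : ℂ) ^ m := rfl

lemma pif_mult (m : ℕ) : (pif m).IsMultiplicative := by
  rw [ArithmeticFunction.IsMultiplicative.iff_ne_zero]
  constructor
  · simp [pif_apply]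
  · intro a b ha hb hab
    simp only [pif_apply, if_neg ha, if_neg hb, if_neg (mul_ne_zero ha hb)]
    push_cast
    rw [mul_pow]
    rw [div_mul_div_comm, one_mul]

lemma one_sub_pinv_ne_zero {p : ℕ} (hp : 1 < p) {m : ℕ} (hm : m ≠ 0) :
    (1 : ℂ) - 1 / (p : ℂ) ^ m ≠ 0 := by
  rw [sub_ne_zero]
  intro h
  have hp0 : ((p : ℂ)) ^ m ≠ 0 := pow_ne_zero _ (by exact_mod_cast (by omega : p ≠ 0))
  rw [eq_div_iff hp0, one_mul] at h
  have : ((p ^ m : ℕ) : ℂ) = ((1 : ℕ) : ℂ) := by push_cast; rw [h]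
  have h2 : p ^ m = 1 := Nat.cast_injective this
  have hlt : 1 < p ^ m := Nat.one_lt_pow hm hp
  omega

lemma gfun_LSeries {k : ℕ} (hk : Squarefree k) {s : ℕ} (hs : 1 ≤ s) :
    LSeries ↗(gfun k) ((2 * s : ℕ) : ℂ) =
      ∏ p ∈ k.primeFactors, (1 - 1 / (p : ℂ) ^ (2 * s)) := by
  have hvan : ∀ n ∉ k.divisors, LSeries.term ↗(gfun k) ((2 * s : ℕ) : ℂ) n = 0 := by
    intro n hn
    rcases eq_or_ne n 0 with rfl | hn0
    · exact LSeries.term_zero _ _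
    · rw [LSeries.term_of_ne_zero hn0]
      have hnd : ¬ n ∣ k := fun hd => hn (Nat.mem_divisors.mpr ⟨hd, hk.ne_zero⟩)
      rw [gfun_apply, if_neg hnd, zero_div]
  rw [LSeries, tsum_eq_sum hvan]
  have hstep : ∀ n ∈ k.divisors,
      LSeries.term ↗(gfun k) ((2 * s : ℕ) : ℂ) n = (μ n : ℂ) * pif (2 * s) n := by
    intro n hn
    obtain ⟨hnd, hk0⟩ := Nat.mem_divisors.mp hn
    have hn0 : n ≠ 0 := by
      rintro rfl
      exact hk0 (Nat.eq_zero_of_zero_dvd hnd)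
    rw [LSeries.term_of_ne_zero hn0, gfun_apply, if_pos hnd, pif_apply, if_neg hn0,
      Complex.cpow_natCast]
    rw [div_eq_mul_one_div]
  rw [Finset.sum_congr rfl hstep,
    ← ArithmeticFunction.IsMultiplicative.prodPrimeFactors_one_sub_of_squarefree _ (pif_mult (2*s)) hk]
  apply Finset.prod_congr rfl
  intro p hp
  rw [pif_apply, if_neg (Nat.prime_of_mem_primeFactors hp).pos.ne']

lemma tsum_succ_eq_LSeries (f : ArithmeticFunction ℂ) {m : ℕ}
    (hsum : LSeriesSummable ↗f ((m : ℕ) : ℂ)) :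
    ∑' d : ℕ, f (d + 1) / ((d : ℂ) + 1) ^ m = LSeries ↗f ((m : ℕ) : ℂ) := by
  rw [LSeries, Summable.tsum_eq_zero_add hsum, LSeries.term_zero, zero_add]
  apply tsum_congr
  intro d
  rw [LSeries.term_of_ne_zero (Nat.succ_ne_zero d)]
  congr 1
  rw [Complex.cpow_natCast]
  push_cast
  ring

lemma moebius_mul_eq {k : ℕ} (hk : Squarefree k) {d : ℕ} (hd : d ≠ 0) :
    (μ (k * d) : ℂ) = (μ k : ℂ) * hfun k d := by
  by_cases hco : Nat.Coprime d k
  · rw [hfun_apply, if_pos hco,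
      isMultiplicative_moebius.map_mul_of_coprime hco.symm]
    push_cast
    ring
  · rw [hfun_apply, if_neg hco, mul_zero]
    have hg1 : Nat.gcd d k ≠ 1 := hco
    have hp : (Nat.gcd d k).minFac.Prime := Nat.minFac_prime hg1
    set p := (Nat.gcd d k).minFac
    have hpd : p ∣ d := (Nat.minFac_dvd _).trans (Nat.gcd_dvd_left d k)
    have hpk : p ∣ k := (Nat.minFac_dvd _).trans (Nat.gcd_dvd_right d k)
    have hns : ¬ Squarefree (k * d) := by
      intro hsf
      exact hp.not_isUnit (hsf p (mul_dvd_mul hpk hpd))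
    rw [ArithmeticFunction.moebius_eq_zero_of_not_squarefree hns]
    simp

theorem moebius_series_eq (s : ℕ) (hs : 1 ≤ s) (k : ℕ) (hk : 0 < k) :
    ∑' d : ℕ, (μ (k * (d + 1)) : ℂ) / ((d : ℂ) + 1) ^ (2 * s) =
      (μ k : ℂ) * (k : ℂ) ^ (2 * s) / (Jordan (2 * s) k * riemannZeta (2 * s)) := by
  by_cases hsq : Squarefree k
  case neg =>
    have h1 : ∀ d : ℕ, (μ (k * (d + 1)) : ℂ) = 0 := by
      intro d
      rw [ArithmeticFunction.moebius_eq_zero_of_not_squarefree, Int.cast_zero]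
      intro hsf
      exact hsq (hsf.squarefree_of_dvd ⟨d + 1, rfl⟩)
    have h2 : (μ k : ℤ) = 0 := ArithmeticFunction.moebius_eq_zero_of_not_squarefree hsq
    calc ∑' d : ℕ, (μ (k * (d + 1)) : ℂ) / ((d : ℂ) + 1) ^ (2 * s)
        = ∑' d : ℕ, (0 : ℂ) := by
          apply tsum_congr; intro d; rw [h1 d, zero_div]
      _ = 0 := tsum_zero
      _ = (μ k : ℂ) * (k : ℂ) ^ (2 * s) / (Jordan (2 * s) k * riemannZeta (2 * s)) := by
          rw [h2]; simp
  case pos =>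
    have hcast : (2 * (s : ℂ)) = ((2 * s : ℕ) : ℂ) := by push_cast; ring
    rw [hcast]
    have hw : (1 : ℝ) < (((2 * s : ℕ) : ℂ)).re := by
      simp only [Complex.natCast_re]
      exact_mod_cast (by omega : 1 < 2 * s)
    set w : ℂ := ((2 * s : ℕ) : ℂ) with hw'
    set P : ℂ := ∏ p ∈ k.primeFactors, (1 - 1 / (p : ℂ) ^ (2 * s)) with hP
    have hPne : P ≠ 0 := by
      rw [hP]
      apply Finset.prod_ne_zero_iff.mpr
      intro p hp
      exact one_sub_pinv_ne_zero (Nat.prime_of_mem_primeFactors hp).one_lt (by omega)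
    have hζne : riemannZeta w ≠ 0 := riemannZeta_ne_zero_of_one_lt_re hw
    have hkm : ((k : ℂ)) ^ (2 * s) ≠ 0 := pow_ne_zero _ (by exact_mod_cast hk.ne')
    -- L-series identities
    have hζsum : LSeriesSummable ↗((ζ : ArithmeticFunction ℕ) : ArithmeticFunction ℂ) w := by
      rw [coe_zeta_eq]
      exact LSeriesSummable_zeta_iff.mpr hw
    have hL1 : LSeries ↗(cfun k) w = riemannZeta w * LSeries ↗(hfun k) w := by
      have h := ArithmeticFunction.LSeries_mul' hζsum (hfun_summable (k := k) hw)
      rw [zeta_mul_hfun hsq, coe_zeta_eq, LSeries_zeta_eq_riemannZeta hw] at h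
      exact h
    have hL2 : LSeries ↗(cfun k) w * LSeries ↗(gfun k) w = 1 := by
      have h := ArithmeticFunction.LSeries_mul' (cfun_summable (k := k) hw)
        (gfun_summable (k := k) hw)
      rw [cfun_mul_gfun hsq, ArithmeticFunction.one_eq_delta, LSeries_delta] at h
      exact h.symm
    have hLg : LSeries ↗(gfun k) w = P := gfun_LSeries hsq hs
    -- rewrite the sum
    have hsum_eq : ∑' d : ℕ, (μ (k * (d + 1)) : ℂ) / ((d : ℂ) + 1) ^ (2 * s) =
        (μ k : ℂ) * LSeries ↗(hfun k) w := by
      rw [← tsum_succ_eq_LSeries (hfun k) (hfun_summable hw), ← tsum_mul_left]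
      apply tsum_congr
      intro d
      rw [moebius_mul_eq hsq (Nat.succ_ne_zero d), mul_div_assoc]
    rw [hsum_eq]
    have hJ : Jordan (2 * s) k = (k : ℂ) ^ (2 * s) * P := rfl
    rw [hJ]
    have hLh : LSeries ↗(hfun k) w = 1 / (P * riemannZeta w) := by
      rw [hL1, hLg] at hL2
      field_simp
      linear_combination hL2
    rw [hLh]
    rw [mul_one_div, div_eq_div_iff (mul_ne_zero hPne hζne)
      (mul_ne_zero (mul_ne_zero hkm hPne) hζne)]
    ring
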